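/- arXiv:1010.1163 — 4 statements merged into one kernel-verified Lean document; each statement's English description precedes it below -/
import Mathlib

section
/- Let M ≥ 1, let x : Fin M → ℂ be injective (distinct constellation points), and let σ > 1. Then the constellation-constrained secrecy capacity function C_σ attains a global maximum at a finite SNR: there exists s* ∈ [0, ∞) such that C_σ(s) ≤ C_σ(s*) for every s ∈ [0, ∞). -/
open MeasureTheory Real

/-- The standard complex Gaussian probability measure on ℂ:
density `w ↦ (1/π)·exp(−|w|²)` with respect to Lebesgue measure on ℂ ≅ ℝ². -/
noncomputable def gaussianC : Measure ℂ :=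
  MeasureTheory.volume.withDensity
    (fun w => ENNReal.ofReal (π⁻¹ * Real.exp (-(‖w‖) ^ 2)))

/-- The expectation term
`g_i(σ, s) = ∫_ℂ log₂( Σ_j exp( −|σ·w + √s·(x i − x j)|² / σ² ) ) dγ(w)`. -/
noncomputable def g (M : ℕ) (x : Fin M → ℂ) (σ s : ℝ) (i : Fin M) : ℝ :=
  ∫ w : ℂ,
    Real.logb 2 (∑ j : Fin M,
      Real.exp (-(‖(σ : ℂ) * w + (Real.sqrt s : ℂ) * (x i - x j)‖) ^ 2 / σ ^ 2))
    ∂gaussianC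

/-- The constellation-constrained secrecy capacity
`C_σ(s) = (1/M)·Σ_i ( g_i(σ, s) − g_i(1, s) )`. -/
noncomputable def Ccc (M : ℕ) (x : Fin M → ℂ) (σ s : ℝ) : ℝ :=
  (1 / (M : ℝ)) * ∑ i : Fin M, (g M x σ s i - g M x 1 s i)

section Aux

open Filter

/-- Gaussian integrability on ℂ. -/
lemma intGaussC {b : ℝ} (hb : 0 < b) :
    Integrable (fun w : ℂ => Real.exp (-b * ‖w‖ ^ 2)) := by
  have h := (GaussianFourier.integrable_cexp_neg_mul_sq_norm_add (V := ℂ) (b := (b : ℂ))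
    (by simpa using hb) 0 0).norm
  refine h.congr (Filter.Eventually.of_forall fun w => ?_)
  simp only [Complex.norm_exp]
  congr 1
  simp [← Complex.ofReal_pow, Complex.add_re, Complex.mul_re,
    Complex.ofReal_re, Complex.ofReal_im]

lemma contDens : Continuous fun w : ℂ => π⁻¹ * Real.exp (-(‖w‖) ^ 2) :=
  continuous_const.mul (Real.continuous_exp.comp ((continuous_norm.pow 2).neg))

lemma intRho : Integrable (fun w : ℂ => π⁻¹ * Real.exp (-(‖w‖) ^ 2)) := by
  have h := (intGaussC one_pos).const_mul π⁻¹
  simpa using h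

lemma measDens : Measurable fun w : ℂ => ENNReal.ofReal (π⁻¹ * Real.exp (-(‖w‖) ^ 2)) :=
  (ENNReal.continuous_ofReal.comp contDens).measurable

instance : IsFiniteMeasure gaussianC := by
  constructor
  rw [gaussianC, withDensity_apply _ MeasurableSet.univ, setLIntegral_univ]
  exact intRho.lintegral_lt_top

lemma intSq : Integrable (fun w : ℂ => ‖w‖ ^ 2) gaussianC := by
  rw [gaussianC, integrable_withDensity_iff measDens (ae_of_all _ fun w => ENNReal.ofReal_lt_top)]
  have heq : (fun w : ℂ =>
        ‖w‖ ^ 2 * (ENNReal.ofReal (π⁻¹ * Real.exp (-(‖w‖) ^ 2))).toReal)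
      = fun w : ℂ => ‖w‖ ^ 2 * (π⁻¹ * Real.exp (-(‖w‖) ^ 2)) := by
    funext w; rw [ENNReal.toReal_ofReal (by positivity)]
  rw [heq]
  have hG : Integrable (fun w : ℂ => 2 * π⁻¹ * Real.exp (-(1/2) * ‖w‖ ^ 2)) :=
    (intGaussC (by norm_num)).const_mul _
  refine hG.mono ((continuous_norm.pow 2).mul contDens).aestronglyMeasurable
    (ae_of_all _ fun w => ?_)
  set t := ‖w‖ ^ 2 with ht
  have ht0 : 0 ≤ t := sq_nonneg _
  have h1 : t ≤ 2 * Real.exp (t / 2) := by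
    have := Real.add_one_le_exp (t / 2)
    nlinarith [Real.exp_pos (t / 2)]
  have h2 : t * Real.exp (-t) ≤ 2 * Real.exp (-(1/2) * t) := by
    calc t * Real.exp (-t) ≤ 2 * Real.exp (t / 2) * Real.exp (-t) :=
          mul_le_mul_of_nonneg_right h1 (Real.exp_pos _).le
      _ = 2 * Real.exp (-(1/2) * t) := by
          rw [mul_assoc, ← Real.exp_add]; congr 2; ring
  rw [Real.norm_eq_abs, Real.norm_eq_abs, abs_of_nonneg (by positivity),
    abs_of_nonneg (by positivity)]
  have h3 := mul_le_mul_of_nonneg_left h2 (show (0:ℝ) ≤ π⁻¹ by positivity)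
  nlinarith [h3]

/-- The inner sum. -/
noncomputable def Sc (M : ℕ) (x : Fin M → ℂ) (i : Fin M) (σ s : ℝ) (w : ℂ) : ℝ :=
  ∑ j : Fin M,
    Real.exp (-(‖(σ : ℂ) * w + (Real.sqrt s : ℂ) * (x i - x j)‖) ^ 2 / σ ^ 2)

variable {M : ℕ} {x : Fin M → ℂ} {i : Fin M} {σ s : ℝ} {w : ℂ}

lemma Sc_pos (hM : 1 ≤ M) : 0 < Sc M x i σ s w := by
  have : Nonempty (Fin M) := ⟨⟨0, hM⟩⟩
  exact Finset.sum_pos (fun j _ => Real.exp_pos _) Finset.univ_nonempty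

lemma Sc_le : Sc M x i σ s w ≤ M := by
  calc Sc M x i σ s w ≤ ∑ _j : Fin M, (1 : ℝ) := by
        refine Finset.sum_le_sum fun j _ => Real.exp_le_one_iff.mpr ?_
        exact div_nonpos_of_nonpos_of_nonneg (neg_nonpos.mpr (sq_nonneg _)) (sq_nonneg _)
    _ = M := by simp

lemma diag_exp (hσ : 0 < σ) :
    Real.exp (-(‖(σ : ℂ) * w + (Real.sqrt s : ℂ) * (x i - x i)‖) ^ 2 / σ ^ 2)
      = Real.exp (-(‖w‖) ^ 2) := by
  rw [sub_self, mul_zero, add_zero, norm_mul, Complex.norm_real, Real.norm_eq_abs, abs_of_pos hσ]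
  congr 1
  field_simp

lemma Sc_ge (hσ : 0 < σ) : Real.exp (-(‖w‖) ^ 2) ≤ Sc M x i σ s w := by
  rw [← diag_exp (x := x) (i := i) (s := s) (w := w) hσ]
  unfold Sc
  exact Finset.single_le_sum
    (f := fun j => Real.exp (-(‖(σ : ℂ) * w + (Real.sqrt s : ℂ) * (x i - x j)‖) ^ 2 / σ ^ 2))
    (fun j _ => (Real.exp_pos _).le) (Finset.mem_univ i)

lemma norm_logb_le (hM : 1 ≤ M) (hσ : 0 < σ) :
    ‖Real.logb 2 (Sc M x i σ s w)‖ ≤ Real.logb 2 M + ‖w‖ ^ 2 / Real.log 2 := by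
  have hpos : 0 < Sc M x i σ s w := Sc_pos hM
  have hM0 : (0:ℝ) < M := by exact_mod_cast Nat.lt_of_lt_of_le Nat.zero_lt_one hM
  have h2 : (0:ℝ) ≤ Real.logb 2 M := Real.logb_nonneg one_lt_two (by exact_mod_cast hM)
  have h3 : (0:ℝ) ≤ ‖w‖ ^ 2 / Real.log 2 := by
    have := Real.log_pos one_lt_two
    positivity
  rw [Real.norm_eq_abs, abs_le]
  constructor
  · have hle := (Real.logb_le_logb one_lt_two (Real.exp_pos _) hpos).mpr (Sc_ge hσ)
    rw [Real.logb, Real.log_exp, neg_div] at hle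
    linarith
  · have hle := (Real.logb_le_logb one_lt_two hpos hM0).mpr Sc_le
    linarith

lemma intBound :
    Integrable (fun w : ℂ => Real.logb 2 M + ‖w‖ ^ 2 / Real.log 2) gaussianC :=
  (integrable_const _).add (intSq.div_const _)

lemma cont_logb_comp {α : Type*} [TopologicalSpace α] {h : α → ℝ} (hc : Continuous h)
    (hp : ∀ a, 0 < h a) : Continuous fun a => Real.logb 2 (h a) :=
  continuous_iff_continuousAt.mpr fun a =>
    (Real.continuousAt_logb (hp a).ne').comp hc.continuousAt

lemma contSc_w : Continuous fun w : ℂ => Sc M x i σ s w :=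
  continuous_finset_sum _ fun j _ =>
    Real.continuous_exp.comp
      (((continuous_norm.comp
        ((continuous_const.mul continuous_id).add continuous_const)).pow 2).neg.div_const _)

lemma contSc_s (w : ℂ) : Continuous fun s : ℝ => Sc M x i σ s w :=
  continuous_finset_sum _ fun j _ =>
    Real.continuous_exp.comp
      (((continuous_norm.comp
        (continuous_const.add
          ((Complex.continuous_ofReal.comp Real.continuous_sqrt).mul continuous_const))).pow
            2).neg.div_const _)

lemma sqrt_tendsto_atTop : Tendsto Real.sqrt atTop atTop := by
  refine tendsto_atTop_atTop.mpr fun b => ⟨b ^ 2, fun a ha => ?_⟩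
  rcases le_or_gt b 0 with hb | hb
  · exact hb.trans (Real.sqrt_nonneg a)
  · calc b = Real.sqrt (b ^ 2) := (Real.sqrt_sq hb.le).symm
      _ ≤ Real.sqrt a := Real.sqrt_le_sqrt ha

lemma tendsto_Sc (hσ : 0 < σ) (hx : Function.Injective x) (w : ℂ) :
    Tendsto (fun s => Sc M x i σ s w) atTop (nhds (Real.exp (-(‖w‖) ^ 2))) := by
  have hsum : Real.exp (-(‖w‖) ^ 2)
      = ∑ j : Fin M, (if j = i then Real.exp (-(‖w‖) ^ 2) else 0) := by
    simp
  rw [hsum]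
  apply tendsto_finset_sum
  intro j _
  by_cases hj : j = i
  · subst hj
    rw [if_pos rfl]
    have hconst : (fun s : ℝ => Real.exp
        (-(‖(σ : ℂ) * w + (Real.sqrt s : ℂ) * (x j - x j)‖) ^ 2 / σ ^ 2))
        = fun _ => Real.exp (-(‖w‖) ^ 2) := funext fun s => diag_exp hσ
    rw [hconst]
    exact tendsto_const_nhds
  · rw [if_neg hj]
    set d := x i - x j with hd
    have hd0 : d ≠ 0 := sub_ne_zero.mpr fun h => hj (hx h).symm
    have hdpos : 0 < ‖d‖ := norm_pos_iff.mpr hd0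
    have hA : Tendsto (fun s => ‖(σ : ℂ) * w + (Real.sqrt s : ℂ) * d‖)
        atTop atTop := by
      apply tendsto_atTop_mono'
        (f₁ := fun s => Real.sqrt s * ‖d‖ + -(‖(σ : ℂ) * w‖))
      · refine Filter.Eventually.of_forall fun s => ?_
        have h1 := norm_sub_norm_le ((Real.sqrt s : ℂ) * d) (-((σ : ℂ) * w))
        rw [sub_neg_eq_add, norm_neg] at h1
        have h2 : ‖(Real.sqrt s : ℂ) * d‖ = Real.sqrt s * ‖d‖ := by
          rw [norm_mul, Complex.norm_real, Real.norm_eq_abs,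
            abs_of_nonneg (Real.sqrt_nonneg s)]
        rw [h2, add_comm ((Real.sqrt s : ℂ) * d)] at h1
        dsimp only
        linarith
      · have := (sqrt_tendsto_atTop.atTop_mul_const hdpos)
        exact tendsto_atTop_add_const_right _ _ this
    have hpow : Tendsto
        (fun s => ‖(σ : ℂ) * w + (Real.sqrt s : ℂ) * d‖ ^ 2) atTop atTop :=
      (tendsto_pow_atTop (two_ne_zero)).comp hA
    have hdiv : Tendsto
        (fun s => ‖(σ : ℂ) * w + (Real.sqrt s : ℂ) * d‖ ^ 2 / σ ^ 2) atTop atTop :=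
      hpow.atTop_div_const (by positivity)
    have hneg : Tendsto
        (fun s => -(‖(σ : ℂ) * w + (Real.sqrt s : ℂ) * d‖ ^ 2 / σ ^ 2))
        atTop atBot := tendsto_neg_atTop_atBot.comp hdiv
    have hexp := Real.tendsto_exp_atBot.comp hneg
    have : (fun s => Real.exp
        (-(‖(σ : ℂ) * w + (Real.sqrt s : ℂ) * d‖) ^ 2 / σ ^ 2))
        = fun s => Real.exp
        (-(‖(σ : ℂ) * w + (Real.sqrt s : ℂ) * d‖ ^ 2 / σ ^ 2)) := by
      funext s; rw [neg_div]
    rw [this]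
    exact hexp

lemma tendsto_logb_Sc (hM : 1 ≤ M) (hσ : 0 < σ) (hx : Function.Injective x) (w : ℂ) :
    Tendsto (fun s => Real.logb 2 (Sc M x i σ s w)) atTop
      (nhds (-(‖w‖) ^ 2 / Real.log 2)) := by
  have h := ((Real.continuousAt_logb (b := 2)
    (Real.exp_pos (-(‖w‖) ^ 2)).ne').tendsto).comp (tendsto_Sc (i := i) hσ hx w)
  have heq : Real.logb 2 (Real.exp (-(‖w‖) ^ 2))
      = -(‖w‖) ^ 2 / Real.log 2 := by rw [Real.logb, Real.log_exp]
  rw [← heq]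
  exact h

lemma g_eq (σ s : ℝ) (i : Fin M) :
    g M x σ s i = ∫ w, Real.logb 2 (Sc M x i σ s w) ∂gaussianC := rfl

lemma cont_g (hM : 1 ≤ M) (hσ : 0 < σ) (i : Fin M) :
    Continuous fun s => g M x σ s i := by
  simp only [g_eq]
  apply continuous_of_dominated
    (bound := fun w : ℂ => Real.logb 2 M + ‖w‖ ^ 2 / Real.log 2)
  · exact fun s => (cont_logb_comp contSc_w fun w => Sc_pos hM).aestronglyMeasurable
  · exact fun s => ae_of_all _ fun w => norm_logb_le hM hσ
  · exact intBound
  · exact ae_of_all _ fun w => cont_logb_comp (contSc_s w) fun s => Sc_pos hM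

lemma tendsto_g (hM : 1 ≤ M) (hσ : 0 < σ) (hx : Function.Injective x) (i : Fin M) :
    Tendsto (fun s => g M x σ s i) atTop
      (nhds (∫ w, -(‖w‖) ^ 2 / Real.log 2 ∂gaussianC)) := by
  simp only [g_eq]
  apply tendsto_integral_filter_of_dominated_convergence
    (fun w : ℂ => Real.logb 2 M + ‖w‖ ^ 2 / Real.log 2)
  · exact Filter.Eventually.of_forall fun s =>
      (cont_logb_comp contSc_w fun w => Sc_pos hM).aestronglyMeasurable
  · exact Filter.Eventually.of_forall fun s => ae_of_all _ fun w => norm_logb_le hM hσ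
  · exact intBound
  · exact ae_of_all _ fun w => tendsto_logb_Sc hM hσ hx w

lemma tendsto_Ccc (hM : 1 ≤ M) (hσ : 0 < σ) (hx : Function.Injective x) :
    Tendsto (fun s => Ccc M x σ s) atTop (nhds 0) := by
  have h : Tendsto (fun s => ∑ i : Fin M, (g M x σ s i - g M x 1 s i)) atTop
      (nhds (∑ i : Fin M, ((∫ w, -(‖w‖) ^ 2 / Real.log 2 ∂gaussianC)
        - (∫ w, -(‖w‖) ^ 2 / Real.log 2 ∂gaussianC)))) :=
    tendsto_finset_sum _ fun i _ => (tendsto_g hM hσ hx i).sub (tendsto_g hM one_pos hx i)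
  have h2 := h.const_mul (1 / (M : ℝ))
  simpa [Ccc, sub_self] using h2

lemma Ccc_zero (hσ : 0 < σ) : Ccc M x σ 0 = 0 := by
  unfold Ccc
  have hg0 : ∀ i : Fin M, g M x σ 0 i = g M x 1 0 i := by
    intro i
    unfold g
    congr 1
    funext w
    congr 1
    apply Finset.sum_congr rfl
    intro _j _
    simp only [Real.sqrt_zero, Complex.ofReal_zero, zero_mul, add_zero, Complex.ofReal_one,
      one_mul, one_pow, div_one]
    rw [norm_mul, Complex.norm_real, Real.norm_eq_abs, abs_of_pos hσ]
    congr 1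
    field_simp
  simp [hg0]

end Aux

theorem ccsc_global_max (M : ℕ) (hM : 1 ≤ M) (x : Fin M → ℂ)
    (hx : Function.Injective x) (σ : ℝ) (hσ : 1 < σ) :
    ∃ s' ∈ Set.Ici (0 : ℝ), ∀ s ∈ Set.Ici (0 : ℝ), Ccc M x σ s ≤ Ccc M x σ s' := by
  have hσ0 : 0 < σ := lt_trans one_pos hσ
  have hcont : Continuous fun s => Ccc M x σ s := by
    unfold Ccc
    exact continuous_const.mul (continuous_finset_sum _ fun i _ =>
      (cont_g hM hσ0 i).sub (cont_g hM one_pos i))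
  have hlim : Filter.Tendsto (fun s => Ccc M x σ s) Filter.atTop (nhds 0) :=
    tendsto_Ccc hM hσ0 hx
  have hf0 : Ccc M x σ 0 = 0 := Ccc_zero hσ0
  by_cases hcase : ∀ s ∈ Set.Ici (0 : ℝ), Ccc M x σ s ≤ 0
  · exact ⟨0, Set.self_mem_Ici, fun s hs => (hcase s hs).trans_eq hf0.symm⟩
  · push_neg at hcase
    obtain ⟨s₀, hs₀, hpos⟩ := hcase
    have hev : ∀ᶠ s in Filter.atTop, Ccc M x σ s < Ccc M x σ s₀ :=
      hlim.eventually_lt_const hpos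
    obtain ⟨R, hR⟩ := Filter.eventually_atTop.mp hev
    set R' := max R s₀ with hR'
    have hne : (Set.Icc (0 : ℝ) R').Nonempty := ⟨s₀, hs₀, le_max_right _ _⟩
    obtain ⟨s', hs'mem, hmaxOn⟩ :=
      isCompact_Icc.exists_isMaxOn hne hcont.continuousOn
    refine ⟨s', hs'mem.1, fun s hs => ?_⟩
    by_cases hsR : s ≤ R'
    · exact hmaxOn ⟨hs, hsR⟩
    · have hRs : R ≤ s := le_trans (le_max_left R s₀) (le_of_not_ge hsR)
      exact le_of_lt (lt_of_lt_of_le (hR s hRs) (hmaxOn ⟨hs₀, le_max_right _ _⟩))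
end

section
/- For every integer M ≥ 1, every σ > 0, every s ≥ 0 and every i ∈ Fin M, the expectation term is bounded: −log₂ e ≤ g_i(σ, s) ≤ log₂ M. -/
open MeasureTheory Real

lemma int_exp : ∫ w : ℂ, rexp (-(‖w‖) ^ 2) = π := by
  have := Complex.integral_exp_neg_rpow (by norm_num : (1:ℝ) ≤ 2)
  simp only [Real.rpow_two] at this
  rw [this, show (2:ℝ)/2 + 1 = 2 by norm_num, Real.Gamma_two, mul_one]

lemma int_sq_exp : ∫ w : ℂ, (‖w‖) ^ 2 * rexp (-(‖w‖) ^ 2) = π := by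
  have := Complex.integral_rpow_mul_exp_neg_rpow (by norm_num : (1:ℝ) ≤ 2) (by norm_num : (-2:ℝ) < 2)
  simp only [Real.rpow_two] at this
  rw [this, show ((2:ℝ)+2)/2 = 2 by norm_num, Real.Gamma_two]
  ring


lemma key_sq (p : ℝ × ℝ) :
    (‖Complex.measurableEquivRealProd.symm p‖) ^ 2 = p.1 ^ 2 + p.2 ^ 2 := by
  rw [Complex.sq_norm]
  simp [Complex.measurableEquivRealProd, Complex.normSq_apply]
  ring

lemma integrable_exp_c : Integrable (fun w : ℂ => rexp (-(‖w‖) ^ 2)) := by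
  have h1 : Integrable (fun x : ℝ => rexp (-x ^ 2)) := by
    simpa using integrable_exp_neg_mul_sq one_pos
  have hp : Integrable (fun p : ℝ × ℝ => rexp (-p.1 ^ 2) * rexp (-p.2 ^ 2)) := h1.mul_prod h1
  rw [← (Complex.volume_preserving_equiv_real_prod.symm).integrable_comp_emb
    Complex.measurableEquivRealProd.symm.measurableEmbedding]
  refine hp.congr (Filter.Eventually.of_forall fun p => ?_)
  show rexp (-p.1 ^ 2) * rexp (-p.2 ^ 2) = rexp (-(‖Complex.measurableEquivRealProd.symm p‖) ^ 2)
  rw [← Real.exp_add, key_sq]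
  ring_nf

lemma integrable_sq_exp_c :
    Integrable (fun w : ℂ => (‖w‖) ^ 2 * rexp (-(‖w‖) ^ 2)) := by
  have h1 : Integrable (fun x : ℝ => rexp (-x ^ 2)) := by
    simpa using integrable_exp_neg_mul_sq one_pos
  have h2 : Integrable (fun x : ℝ => x ^ 2 * rexp (-x ^ 2)) := by
    have := integrable_rpow_mul_exp_neg_mul_sq one_pos (by norm_num : (-1:ℝ) < 2)
    refine this.congr (Filter.Eventually.of_forall fun x => ?_)
    simp only [show ((2:ℝ) = ((2:ℕ):ℝ)) by norm_num, Real.rpow_natCast]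
    norm_num
  have hp : Integrable (fun p : ℝ × ℝ =>
      (p.1 ^ 2 * rexp (-p.1 ^ 2)) * rexp (-p.2 ^ 2) + rexp (-p.1 ^ 2) * (p.2 ^ 2 * rexp (-p.2 ^ 2))) :=
    (h2.mul_prod h1).add (h1.mul_prod h2)
  rw [← (Complex.volume_preserving_equiv_real_prod.symm).integrable_comp_emb
    Complex.measurableEquivRealProd.symm.measurableEmbedding]
  refine hp.congr (Filter.Eventually.of_forall fun p => ?_)
  show _ = (‖Complex.measurableEquivRealProd.symm p‖) ^ 2 * rexp (-(‖Complex.measurableEquivRealProd.symm p‖) ^ 2)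
  simp only [key_sq]
  rw [show -(p.1 ^ 2 + p.2 ^ 2) = -p.1^2 + -p.2^2 by ring, Real.exp_add]
  ring

lemma rho_meas : Measurable fun w : ℂ => (π⁻¹ * rexp (-(‖w‖) ^ 2)).toNNReal := by
  exact ((continuous_const.mul (Real.continuous_exp.comp
    ((continuous_norm.pow 2).neg))).measurable).real_toNNReal

lemma gaussianC_eq : gaussianC =
    MeasureTheory.volume.withDensity
      (fun w : ℂ => ((π⁻¹ * rexp (-(‖w‖) ^ 2)).toNNReal : ENNReal)) := by
  rfl

lemma rho_nonneg (w : ℂ) : 0 ≤ π⁻¹ * rexp (-(‖w‖) ^ 2) := by positivity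

lemma integrable_gaussianC_iff (f : ℂ → ℝ) :
    Integrable f gaussianC ↔
      Integrable (fun w => (π⁻¹ * rexp (-(‖w‖) ^ 2)) * f w) volume := by
  rw [gaussianC_eq, integrable_withDensity_iff_integrable_smul rho_meas]
  apply integrable_congr
  refine Filter.Eventually.of_forall fun w => ?_
  simp [NNReal.smul_def, Real.coe_toNNReal _ (rho_nonneg w)]

lemma integral_gaussianC (f : ℂ → ℝ) :
    ∫ w, f w ∂gaussianC = ∫ w, (π⁻¹ * rexp (-(‖w‖) ^ 2)) * f w := by
  rw [gaussianC_eq, integral_withDensity_eq_integral_smul rho_meas]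
  apply integral_congr_ae
  refine Filter.Eventually.of_forall fun w => ?_
  simp [NNReal.smul_def, Real.coe_toNNReal _ (rho_nonneg w)]

instance gaussianC_prob : IsProbabilityMeasure gaussianC := by
  constructor
  rw [gaussianC]
  rw [withDensity_apply _ MeasurableSet.univ, setLIntegral_univ]
  rw [← ofReal_integral_eq_lintegral_ofReal]
  · rw [integral_const_mul, int_exp, inv_mul_cancel₀ pi_ne_zero]
    exact ENNReal.ofReal_one
  · exact integrable_exp_c.const_mul _
  · exact Filter.Eventually.of_forall rho_nonneg

lemma integrable_abs_sq : Integrable (fun w : ℂ => (‖w‖) ^ 2) gaussianC := by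
  rw [integrable_gaussianC_iff]
  refine (integrable_sq_exp_c.const_mul π⁻¹).congr (Filter.Eventually.of_forall fun w => ?_)
  ring

lemma moment_two : ∫ w, (‖w‖) ^ 2 ∂gaussianC = 1 := by
  rw [integral_gaussianC]
  have : ∀ w : ℂ, (π⁻¹ * rexp (-(‖w‖) ^ 2)) * (‖w‖) ^ 2
      = π⁻¹ * ((‖w‖) ^ 2 * rexp (-(‖w‖) ^ 2)) := fun w => by ring
  simp_rw [this, integral_const_mul, int_sq_exp, inv_mul_cancel₀ pi_ne_zero]


theorem g_bounds (M : ℕ) (hM : 1 ≤ M) (x : Fin M → ℂ)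
    (σ : ℝ) (hσ : 0 < σ) (s : ℝ) (hs : 0 ≤ s) (i : Fin M) :
    -(Real.logb 2 (Real.exp 1)) ≤ g M x σ s i ∧ g M x σ s i ≤ Real.logb 2 M := by
  haveI := gaussianC_prob
  haveI : Nonempty (Fin M) := ⟨i⟩
  set S : ℂ → ℝ := fun w => ∑ j : Fin M,
    Real.exp (-(‖(σ : ℂ) * w + (Real.sqrt s : ℂ) * (x i - x j)‖) ^ 2 / σ ^ 2) with hS
  have hSpos : ∀ w, 0 < S w := fun w =>
    Finset.sum_pos (fun j _ => Real.exp_pos _) Finset.univ_nonempty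
  have hSleM : ∀ w, S w ≤ M := by
    intro w
    calc S w ≤ ∑ _j : Fin M, (1 : ℝ) := by
          refine Finset.sum_le_sum fun j _ => ?_
          rw [Real.exp_le_one_iff]
          apply div_nonpos_of_nonpos_of_nonneg (neg_nonpos.mpr (by positivity)) (by positivity)
      _ = M := by simp
  have hSge : ∀ w, rexp (-(‖w‖) ^ 2) ≤ S w := by
    intro w
    have key : ‖(σ : ℂ) * w + (Real.sqrt s : ℂ) * (x i - x i)‖ ^ 2 / σ ^ 2
        = (‖w‖) ^ 2 := by
      rw [sub_self, mul_zero, add_zero, norm_mul, Complex.norm_real, Real.norm_eq_abs, abs_of_pos hσ, mul_pow]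
      field_simp
    have := Finset.single_le_sum (f := fun j : Fin M =>
      Real.exp (-(‖(σ : ℂ) * w + (Real.sqrt s : ℂ) * (x i - x j)‖) ^ 2 / σ ^ 2))
      (fun j _ => (Real.exp_pos _).le) (Finset.mem_univ i)
    rw [neg_div, key] at this
    rw [show -‖w‖ ^ 2 = -(‖w‖ ^ 2) by ring]
    exact this
  have hub : ∀ w, Real.logb 2 (S w) ≤ Real.logb 2 M :=
    fun w => Real.logb_le_logb_of_le one_lt_two (hSpos w) (hSleM w)
  have hlb : ∀ w, -(‖w‖) ^ 2 / Real.log 2 ≤ Real.logb 2 (S w) := by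
    intro w
    have h1 : Real.logb 2 (rexp (-(‖w‖) ^ 2)) = -(‖w‖) ^ 2 / Real.log 2 := by
      rw [Real.logb, Real.log_exp]
    rw [← h1]
    exact Real.logb_le_logb_of_le one_lt_two (Real.exp_pos _) (hSge w)
  have hScont : Continuous S := by
    apply continuous_finset_sum
    intro j _
    exact Real.continuous_exp.comp
      ((((continuous_norm.comp ((continuous_const.mul continuous_id).add
        continuous_const)).pow 2).neg).div_const _)
  have hm : Measurable fun w => Real.logb 2 (S w) := by
    simp only [Real.logb]
    exact (Real.measurable_log.comp hScont.measurable).div_const _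
  have hM0 : (0:ℝ) ≤ Real.logb 2 M := Real.logb_nonneg one_lt_two (by exact_mod_cast hM)
  have inth : Integrable (fun w => Real.logb 2 (S w)) gaussianC := by
    have hgint : Integrable (fun w : ℂ => Real.logb 2 M + (‖w‖) ^ 2 / Real.log 2) gaussianC :=
      (integrable_const (Real.logb 2 M)).add (integrable_abs_sq.div_const (Real.log 2))
    refine Integrable.mono'
      (g := fun w => Real.logb 2 M + (‖w‖) ^ 2 / Real.log 2)
      hgint
      hm.aestronglyMeasurable (Filter.Eventually.of_forall fun w => ?_)
    rw [Real.norm_eq_abs, abs_le]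
    have hnd : -(‖w‖) ^ 2 / Real.log 2 = -((‖w‖) ^ 2 / Real.log 2) := by
      rw [neg_div]
    constructor
    · have := hlb w; rw [hnd] at this; linarith
    · have hpos : 0 ≤ (‖w‖) ^ 2 / Real.log 2 :=
        div_nonneg (by positivity) (Real.log_pos one_lt_two).le
      linarith [hub w]
  have intL : Integrable (fun w : ℂ => -(‖w‖) ^ 2 / Real.log 2) gaussianC :=
    integrable_abs_sq.neg.div_const _
  have hgdef : g M x σ s i = ∫ w, Real.logb 2 (S w) ∂gaussianC := rfl
  constructor
  · rw [hgdef]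
    have hle := integral_mono intL inth (fun w => hlb w)
    have : ∫ w, -(‖w‖) ^ 2 / Real.log 2 ∂gaussianC = -(Real.logb 2 (Real.exp 1)) := by
      rw [integral_div, integral_neg, moment_two]
      simp [Real.logb, Real.log_exp, neg_div]
    linarith [this ▸ hle]
  · rw [hgdef]
    have hle := integral_mono inth (integrable_const (Real.logb 2 M)) (fun w => hub w)
    simpa using hle
end

section
/- For every integer M ≥ 1, every σ > 0 and every i ∈ Fin M, the function s ↦ g_i(σ, s) is continuous on [0, ∞). -/
open MeasureTheory Real
set_option maxHeartbeats 1000000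

lemma int_exp_s9 {c : ℝ} (hc : 0 < c) :
    Integrable (fun w : ℂ => Real.exp (-c * ‖w‖ ^ 2)) volume := by
  have h := (GaussianFourier.integrable_cexp_neg_mul_sq_norm_add (V := ℂ) (b := (c : ℂ))
    (by simpa using hc) 0 0).norm
  convert h using 2 with w
  simp [Complex.norm_exp, ← Complex.ofReal_pow]

section Aux
variable (M : ℕ) (x : Fin M → ℂ) (σ : ℝ) (i : Fin M)

noncomputable def Sfun (s : ℝ) (w : ℂ) : ℝ :=
  ∑ j : Fin M, Real.exp (-(‖(σ : ℂ) * w + (Real.sqrt s : ℂ) * (x i - x j)‖) ^ 2 / σ ^ 2)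

lemma Sfun_cont : Continuous fun p : ℝ × ℂ => Sfun M x σ i p.1 p.2 := by
  unfold Sfun
  apply continuous_finset_sum
  intro j _
  apply Real.continuous_exp.comp
  apply Continuous.div_const
  apply Continuous.neg
  apply Continuous.pow
  exact continuous_norm.comp (by fun_prop)

lemma Sfun_pos (s : ℝ) (w : ℂ) : 0 < Sfun M x σ i s w :=
  Finset.sum_pos (fun j _ => Real.exp_pos _) ⟨i, Finset.mem_univ i⟩

lemma Sfun_le (s : ℝ) (w : ℂ) : Sfun M x σ i s w ≤ M := by
  calc Sfun M x σ i s w ≤ ∑ _j : Fin M, (1 : ℝ) := by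
        apply Finset.sum_le_sum
        intro j _
        apply Real.exp_le_one_iff.mpr
        apply div_nonpos_of_nonpos_of_nonneg
        · simp only [neg_nonpos]
          positivity
        · positivity
    _ = M := by simp

lemma Sfun_ge (hσ : 0 < σ) (s : ℝ) (w : ℂ) : Real.exp (-(‖w‖ ^ 2)) ≤ Sfun M x σ i s w := by
  have key : Real.exp (-(‖(σ : ℂ) * w + (Real.sqrt s : ℂ) * (x i - x i)‖) ^ 2 / σ ^ 2)
      = Real.exp (-(‖w‖ ^ 2)) := by
    congr 1
    rw [sub_self, mul_zero, add_zero, norm_mul]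
    simp only [Complex.norm_real, Real.norm_eq_abs, abs_of_pos hσ]
    field_simp
  rw [← key]
  exact Finset.single_le_sum (f := fun j : Fin M =>
    Real.exp (-(‖(σ : ℂ) * w + (Real.sqrt s : ℂ) * (x i - x j)‖) ^ 2 / σ ^ 2))
    (fun j _ => (Real.exp_pos _).le) (Finset.mem_univ i)

lemma logb_Sfun_cont : Continuous fun p : ℝ × ℂ => Real.logb 2 (Sfun M x σ i p.1 p.2) := by
  rw [continuous_iff_continuousAt]
  intro p
  unfold Real.logb
  apply ContinuousAt.div_const
  exact ContinuousAt.comp (f := fun p : ℝ × ℂ => Sfun M x σ i p.1 p.2)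
    (Real.continuousAt_log (Sfun_pos M x σ i p.1 p.2).ne')
    (Sfun_cont M x σ i).continuousAt
end Aux

theorem g_continuousOn (M : ℕ) (hM : 1 ≤ M) (x : Fin M → ℂ)
    (σ : ℝ) (hσ : 0 < σ) (i : Fin M) :
    ContinuousOn (fun s => g M x σ s i) (Set.Ici (0 : ℝ)) := by
  set A : ℝ := Real.logb 2 M with hA
  set B : ℝ := (Real.log 2)⁻¹ with hB
  have hBpos : 0 < B := by rw [hB]; positivity
  have hAnn : 0 ≤ A := Real.logb_nonneg one_lt_two (by exact_mod_cast hM)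
  have hL := logb_Sfun_cont M x σ i
  have hg : (fun s => g M x σ s i)
      = fun s => ∫ w, Real.logb 2 (Sfun M x σ i s w) ∂gaussianC := rfl
  rw [hg]
  refine continuousOn_of_dominated (F := fun s w => Real.logb 2 (Sfun M x σ i s w))
    (bound := fun w : ℂ => A + B * ‖w‖ ^ 2) ?_ ?_ ?_ ?_
  · intro s _
    exact (hL.comp (Continuous.prodMk_right s)).aestronglyMeasurable
  · intro s _
    refine Filter.Eventually.of_forall fun w => ?_
    rw [Real.norm_eq_abs, abs_le]
    constructor
    · have h1 : Real.logb 2 (Real.exp (-(‖w‖ ^ 2))) ≤ Real.logb 2 (Sfun M x σ i s w) :=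
        Real.logb_le_logb_of_le one_lt_two (Real.exp_pos _) (Sfun_ge M x σ i hσ s w)
      have h2 : Real.logb 2 (Real.exp (-(‖w‖ ^ 2))) = -(B * ‖w‖ ^ 2) := by
        rw [Real.logb, Real.log_exp, hB]; ring
      nlinarith [sq_nonneg ‖w‖]
    · have h1 : Real.logb 2 (Sfun M x σ i s w) ≤ Real.logb 2 M :=
        Real.logb_le_logb_of_le one_lt_two (Sfun_pos M x σ i s w) (Sfun_le M x σ i s w)
      nlinarith [sq_nonneg ‖w‖, hBpos]
  · have hcontd : Continuous fun w : ℂ => π⁻¹ * Real.exp (-(‖w‖) ^ 2) := by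
      apply Continuous.mul continuous_const
      exact Real.continuous_exp.comp (continuous_norm.pow 2).neg
    rw [gaussianC, integrable_withDensity_iff]
    rotate_left
    · exact ENNReal.measurable_ofReal.comp hcontd.measurable
    · exact Filter.Eventually.of_forall fun w => ENNReal.ofReal_lt_top
    have hclean : Integrable
        (fun w : ℂ => (A + B * ‖w‖ ^ 2) * (π⁻¹ * Real.exp (-(‖w‖) ^ 2))) volume := by
      apply Integrable.mono'
        ((int_exp_s9 (by norm_num : (0:ℝ) < 1/2)).const_mul (π⁻¹ * (A + 2 * B)))
      · exact (((continuous_const.add (continuous_const.mul (continuous_norm.pow 2))).mul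
          hcontd)).aestronglyMeasurable
      refine Filter.Eventually.of_forall fun w => ?_
      have ht : (0:ℝ) ≤ ‖w‖ ^ 2 := sq_nonneg _
      set t : ℝ := ‖w‖ ^ 2 with htdef
      set E : ℝ := Real.exp (-(1/2) * t) with hEdef
      have hE : 0 < E := Real.exp_pos _
      have habs : (‖w‖ : ℝ) ^ 2 = t := by
        rw [htdef]
      rw [Real.norm_eq_abs, abs_of_nonneg (by positivity)]
      have hexp : 1 + t / 2 ≤ Real.exp (t / 2) := by
        have := Real.add_one_le_exp (t / 2)
        linarith
      have hE1 : E * (1 + t / 2) ≤ 1 := by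
        have h := mul_le_mul_of_nonneg_left hexp hE.le
        have : E * Real.exp (t / 2) = 1 := by
          rw [hEdef, ← Real.exp_add, show -(1/2) * t + t/2 = 0 by ring, Real.exp_zero]
        linarith
      have hsq : Real.exp (-t) = E * E := by
        rw [hEdef, ← Real.exp_add]; congr 1; ring
      have hstep : (A + B * t) * E ≤ A + 2 * B := by
        have h1 : A + B * t ≤ (A + 2 * B) * (1 + t / 2) := by nlinarith
        calc (A + B * t) * E ≤ ((A + 2 * B) * (1 + t / 2)) * E :=
              mul_le_mul_of_nonneg_right h1 hE.le
          _ = (A + 2 * B) * (E * (1 + t / 2)) := by ring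
          _ ≤ (A + 2 * B) * 1 := by
              apply mul_le_mul_of_nonneg_left hE1 (by linarith)
          _ = A + 2 * B := mul_one _
      rw [hsq]
      have hgoal : (A + B * t) * (π⁻¹ * (E * E)) = π⁻¹ * E * ((A + B * t) * E) := by ring
      rw [hgoal]
      calc π⁻¹ * E * ((A + B * t) * E) ≤ π⁻¹ * E * (A + 2 * B) := by
            apply mul_le_mul_of_nonneg_left hstep (by positivity)
        _ = π⁻¹ * (A + 2 * B) * E := by ring
    apply hclean.congr
    refine Filter.Eventually.of_forall fun w => ?_
    dsimp only
    rw [ENNReal.toReal_ofReal (by positivity)]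
  · refine Filter.Eventually.of_forall fun w => ?_
    have hc := hL.comp (f := fun s : ℝ => (s, w)) (by fun_prop)
    exact hc.continuousOn
end

section
/- For every integer M ≥ 1, every constellation x : Fin M → ℂ and every σ > 0, the constellation-constrained secrecy capacity function s ↦ C_σ(s) is continuous on [0, ∞). -/
open MeasureTheory Real

lemma int_exp_gauss : Integrable (fun w : ℂ => Real.exp (-(‖w‖) ^ 2)) volume := by
  have h : Integrable (fun p : ℝ × ℝ => Real.exp (-1 * p.1 ^ 2) * Real.exp (-1 * p.2 ^ 2))
      (volume : Measure (ℝ × ℝ)) := by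
    rw [Measure.volume_eq_prod]
    exact (integrable_exp_neg_mul_sq one_pos).mul_prod (integrable_exp_neg_mul_sq one_pos)
  have h2 := (Complex.volume_preserving_equiv_real_prod.integrable_comp
      h.aestronglyMeasurable).2 h
  refine h2.congr (Filter.Eventually.of_forall fun w => ?_)
  simp only [Function.comp_apply, Complex.measurableEquivRealProd_apply, Complex.sq_norm,
    Complex.normSq_apply, neg_mul, one_mul]
  rw [← Real.exp_add]
  ring_nf

lemma int_sq_exp_gauss :
    Integrable (fun w : ℂ => (‖w‖) ^ 2 * Real.exp (-(‖w‖) ^ 2)) volume := by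
  have hx2 : Integrable (fun t : ℝ => t ^ 2 * Real.exp (-1 * t ^ 2)) volume := by
    have := integrable_rpow_mul_exp_neg_mul_sq (b := 1) one_pos (s := 2) (by norm_num)
    simpa [Real.rpow_two] using this
  have h : Integrable (fun p : ℝ × ℝ =>
      (p.1 ^ 2 * Real.exp (-1 * p.1 ^ 2)) * Real.exp (-1 * p.2 ^ 2)
        + Real.exp (-1 * p.1 ^ 2) * (p.2 ^ 2 * Real.exp (-1 * p.2 ^ 2)))
      (volume : Measure (ℝ × ℝ)) := by
    rw [Measure.volume_eq_prod]
    exact (hx2.mul_prod (integrable_exp_neg_mul_sq one_pos)).add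
      ((integrable_exp_neg_mul_sq one_pos).mul_prod hx2)
  have h2 := (Complex.volume_preserving_equiv_real_prod.integrable_comp
      h.aestronglyMeasurable).2 h
  refine h2.congr (Filter.Eventually.of_forall fun w => ?_)
  simp only [Function.comp_apply, Complex.measurableEquivRealProd_apply, Complex.sq_norm,
    Complex.normSq_apply, neg_mul, one_mul]
  rw [show -(w.re * w.re + w.im * w.im) = -w.re ^ 2 + -w.im ^ 2 by ring, Real.exp_add]
  ring

lemma gauss_density_meas :
    Measurable (fun w : ℂ => ENNReal.ofReal (π⁻¹ * Real.exp (-(‖w‖) ^ 2))) := by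
  apply ENNReal.measurable_ofReal.comp
  exact (continuous_const.mul (Real.continuous_exp.comp
    ((continuous_norm.pow 2).neg))).measurable

lemma integrable_bound (c : ℝ) :
    Integrable (fun w : ℂ => (‖w‖) ^ 2 / Real.log 2 + c) gaussianC := by
  rw [gaussianC, integrable_withDensity_iff gauss_density_meas
    (Filter.Eventually.of_forall fun w => ENNReal.ofReal_lt_top)]
  have heq : ∀ w : ℂ,
      ((‖w‖) ^ 2 / Real.log 2 + c)
          * (ENNReal.ofReal (π⁻¹ * Real.exp (-(‖w‖) ^ 2))).toReal
        = (π⁻¹ / Real.log 2) * ((‖w‖) ^ 2 * Real.exp (-(‖w‖) ^ 2))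
          + (c * π⁻¹) * Real.exp (-(‖w‖) ^ 2) := by
    intro w
    rw [ENNReal.toReal_ofReal (by positivity)]
    ring
  refine Integrable.congr ?_ (Filter.Eventually.of_forall fun w => (heq w).symm)
  exact (int_sq_exp_gauss.const_mul _).add (int_exp_gauss.const_mul _)

theorem ccsc_continuousOn (M : ℕ) (hM : 1 ≤ M) (x : Fin M → ℂ) (σ : ℝ) (hσ : 0 < σ) :
    ContinuousOn (fun s => Ccc M x σ s) (Set.Ici (0 : ℝ)) := by
  have hMpos : 0 < M := hM
  haveI : Nonempty (Fin M) := Fin.pos_iff_nonempty.mp hMpos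
  have key : ∀ (τ : ℝ), 0 < τ → ∀ i : Fin M, Continuous (fun s => g M x τ s i) := by
    intro τ hτ i
    set S : ℝ → ℂ → ℝ := fun s w => ∑ j : Fin M,
      Real.exp (-(‖(τ : ℂ) * w + (Real.sqrt s : ℂ) * (x i - x j)‖) ^ 2 / τ ^ 2)
      with hS
    have hSpos : ∀ s w, 0 < S s w := fun s w =>
      Finset.sum_pos (fun j _ => Real.exp_pos _) Finset.univ_nonempty
    have hSle : ∀ s w, S s w ≤ M := by
      intro s w
      calc S s w ≤ ∑ _j : Fin M, (1 : ℝ) := by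
            refine Finset.sum_le_sum fun j _ => ?_
            exact Real.exp_le_one_iff.mpr
              (div_nonpos_of_nonpos_of_nonneg (neg_nonpos.mpr (sq_nonneg _)) (sq_nonneg _))
        _ = M := by simp
    have hSge : ∀ s w, Real.exp (-(‖w‖) ^ 2) ≤ S s w := by
      intro s w
      have hterm : Real.exp
          (-(‖(τ : ℂ) * w + (Real.sqrt s : ℂ) * (x i - x i)‖) ^ 2 / τ ^ 2)
          = Real.exp (-(‖w‖) ^ 2) := by
        rw [sub_self, mul_zero, add_zero, norm_mul, Complex.norm_real, Real.norm_eq_abs, abs_of_pos hτ]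
        rw [mul_pow, neg_div, mul_comm, mul_div_assoc, div_self (pow_ne_zero 2 hτ.ne'), mul_one]
      calc Real.exp (-(‖w‖) ^ 2) = _ := hterm.symm
        _ ≤ S s w := Finset.single_le_sum
            (f := fun j => Real.exp
              (-(‖(τ : ℂ) * w + (Real.sqrt s : ℂ) * (x i - x j)‖) ^ 2 / τ ^ 2))
            (fun j _ => (Real.exp_pos _).le) (Finset.mem_univ i)
    have hScont : ∀ w, Continuous (fun s => S s w) := by
      intro w
      refine continuous_finset_sum _ fun j _ => ?_
      have : Continuous fun s : ℝ =>
          (τ : ℂ) * w + ((Real.sqrt s : ℝ) : ℂ) * (x i - x j) :=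
        continuous_const.add
          ((Complex.continuous_ofReal.comp Real.continuous_sqrt).mul continuous_const)
      exact Real.continuous_exp.comp
        (((continuous_norm.comp this).pow 2).neg.div_const _)
    have hWcont : ∀ s, Continuous (fun w => S s w) := by
      intro s
      refine continuous_finset_sum _ fun j _ => ?_
      have : Continuous fun w : ℂ =>
          (τ : ℂ) * w + ((Real.sqrt s : ℝ) : ℂ) * (x i - x j) :=
        (continuous_const.mul continuous_id).add continuous_const
      exact Real.continuous_exp.comp
        (((continuous_norm.comp this).pow 2).neg.div_const _)
    have goal : Continuous fun s => ∫ w : ℂ, Real.logb 2 (S s w) ∂gaussianC := by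
      apply MeasureTheory.continuous_of_dominated
        (bound := fun w : ℂ => (‖w‖) ^ 2 / Real.log 2 + Real.logb 2 M)
      · intro s
        apply Continuous.aestronglyMeasurable
        simp only [Real.logb]
        exact ((hWcont s).log fun w => (hSpos s w).ne').div_const _
      · intro s
        refine Filter.Eventually.of_forall fun w => ?_
        rw [Real.norm_eq_abs, abs_le]
        constructor
        · have h1 : Real.logb 2 (Real.exp (-(‖w‖) ^ 2)) ≤ Real.logb 2 (S s w) :=
            Real.logb_le_logb_of_le one_lt_two (Real.exp_pos _) (hSge s w)
          have h2 : Real.logb 2 (Real.exp (-(‖w‖) ^ 2))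
              = -((‖w‖) ^ 2 / Real.log 2) := by
            simp [Real.logb, Real.log_exp, neg_div]
          have h3 : (0 : ℝ) ≤ Real.logb 2 M :=
            Real.logb_nonneg one_lt_two (by exact_mod_cast hM)
          rw [h2] at h1
          linarith
        · have h1 : Real.logb 2 (S s w) ≤ Real.logb 2 M :=
            Real.logb_le_logb_of_le one_lt_two (hSpos s w) (hSle s w)
          have h2 : (0 : ℝ) ≤ (‖w‖) ^ 2 / Real.log 2 := by positivity
          linarith
      · exact integrable_bound _
      · refine Filter.Eventually.of_forall fun w => ?_
        simp only [Real.logb]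
        exact ((hScont w).log fun s => (hSpos s w).ne').div_const _
    exact goal
  apply Continuous.continuousOn
  unfold Ccc
  exact continuous_const.mul
    (continuous_finset_sum _ fun i _ => (key σ hσ i).sub (key 1 one_pos i))
end
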